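/- Let V, η, ξ, φ, h, κ, μ be as in the previous context (φ² = −id + ξ·η, hξ = 0, η∘h = 0, hφ = −φh, h² = (κ−1)φ², κ < 1, (1−μ/2)² > 1−κ). Define φ̃ := h/√(1−κ) and φ̃₁ := (1/(2√((1−κ)((1−μ/2)²−(1−κ)))))·((2−μ)·(φ∘h) + 2(1−κ)·φ). Then φ̃∘φ̃₁ = φ̄₋ and φ̃₁∘φ̃ = φ̄₊, where φ̄_± := ±(1/√((1−μ/2)²−(1−κ)))·((1−μ/2)φ + φh). In particular φ̃ and φ̃₁ anticommute. -/

import Mathlib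

theorem stmt_3 {V : Type*} [AddCommGroup V] [Module ℝ V]
    (η : V →ₗ[ℝ] ℝ) (ξ : V) (hξ : η ξ = 1)
    (φ h : Module.End ℝ V) (κ μ : ℝ) (hκ : κ < 1)
    (hμ : (1 - μ / 2) ^ 2 > 1 - κ)
    (hφ2 : φ ^ 2 = -1 + η.smulRight ξ)
    (hhξ : h ξ = 0) (hηh : ∀ v, η (h v) = 0)
    (hanti : h * φ = -(φ * h))
    (hh2 : h ^ 2 = (κ - 1) • φ ^ 2) :
    let φt : Module.End ℝ V := (1 / Real.sqrt (1 - κ)) • h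
    let φt1 : Module.End ℝ V :=
      (1 / (2 * Real.sqrt ((1 - κ) * ((1 - μ / 2) ^ 2 - (1 - κ))))) •
        ((2 - μ) • (φ * h) + (2 * (1 - κ)) • φ)
    let φbarm : Module.End ℝ V :=
      -((1 / Real.sqrt ((1 - μ / 2) ^ 2 - (1 - κ))) • ((1 - μ / 2) • φ + φ * h))
    let φbarp : Module.End ℝ V :=
      (1 / Real.sqrt ((1 - μ / 2) ^ 2 - (1 - κ))) • ((1 - μ / 2) • φ + φ * h)
    φt * φt1 = φbarm ∧ φt1 * φt = φbarp ∧ φt * φt1 = -(φt1 * φt) := by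
  intro φt φt1 φbarm φbarp
  set P : Module.End ℝ V := η.smulRight ξ with hP
  -- φ commutes with P
  have hcomm : φ * P = P * φ := by
    have h1 : φ * φ ^ 2 = φ ^ 2 * φ := by rw [pow_two, mul_assoc]
    rw [hφ2, mul_add, add_mul, mul_neg_one, neg_one_mul] at h1
    exact add_left_cancel h1
  -- φ ξ = 0
  have hφξ : φ ξ = η (φ ξ) • ξ := by
    have := congrArg (fun f : Module.End ℝ V => f ξ) hcomm
    simpa [hP, Module.End.mul_apply, LinearMap.smulRight_apply, hξ, map_smul] using this
  have hφ2ξ : φ (φ ξ) = 0 := by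
    have := congrArg (fun f : Module.End ℝ V => f ξ) hφ2
    simp only [pow_two, Module.End.mul_apply] at this
    simpa [hP, LinearMap.smulRight_apply, hξ] using this
  have ht0 : η (φ ξ) = 0 := by
    have h2 : (η (φ ξ) * η (φ ξ)) • ξ = 0 := by
      calc (η (φ ξ) * η (φ ξ)) • ξ = η (φ ξ) • (η (φ ξ) • ξ) := by rw [mul_smul]
        _ = η (φ ξ) • φ ξ := by rw [← hφξ]
        _ = φ (η (φ ξ) • ξ) := by rw [map_smul]
        _ = φ (φ ξ) := by rw [← hφξ]
        _ = 0 := hφ2ξ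
    have := congrArg η h2
    simp [hξ] at this
    exact mul_self_eq_zero.mp (by simpa [hξ, mul_comm] using this)
  have hφξ0 : φ ξ = 0 := by rw [hφξ, ht0, zero_smul]
  have hPφ : P * φ = 0 := by
    ext v
    have := congrArg (fun f : Module.End ℝ V => f v) hcomm
    simp only [Module.End.mul_apply] at this
    simp only [Module.End.mul_apply, LinearMap.zero_apply]
    rw [← this]
    simp [hP, LinearMap.smulRight_apply, hφξ0]
  have hφ3 : φ ^ 2 * φ = -φ := by
    rw [hφ2, add_mul, neg_one_mul, hPφ, add_zero]
  -- key endomorphism identities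
  have hφ3' : φ * φ ^ 2 = -φ := by rw [pow_two, ← mul_assoc, ← pow_two, hφ3]
  have hkey1 : h * (φ * h) = (κ - 1) • φ := by
    calc h * (φ * h) = (h * φ) * h := by rw [mul_assoc]
      _ = -(φ * (h * h)) := by rw [hanti, neg_mul, mul_assoc]
      _ = -(φ * h ^ 2) := by rw [← pow_two]
      _ = -((κ - 1) • (φ * (φ ^ 2))) := by rw [hh2, mul_smul_comm]
      _ = (κ - 1) • φ := by rw [hφ3', smul_neg, neg_neg]
  have hkey2 : (φ * h) * h = (1 - κ) • φ := by
    calc (φ * h) * h = φ * h ^ 2 := by rw [mul_assoc, ← pow_two]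
      _ = (κ - 1) • (φ * φ ^ 2) := by rw [hh2, mul_smul_comm]
      _ = (1 - κ) • φ := by rw [hφ3', smul_neg, ← neg_smul, neg_sub]
  -- scalar facts
  set a : ℝ := 1 - κ with ha'
  set b : ℝ := (1 - μ / 2) ^ 2 - (1 - κ) with hb'
  have ha : 0 < a := by simp [ha']; linarith
  have hb : 0 < b := by simp [hb']; linarith
  set s : ℝ := Real.sqrt a with hs'
  set t : ℝ := Real.sqrt b with ht'
  have hs0 : 0 < s := Real.sqrt_pos.mpr ha
  have ht0' : 0 < t := Real.sqrt_pos.mpr hb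
  have hss : s * s = a := Real.mul_self_sqrt ha.le
  have hab : Real.sqrt (a * b) = s * t := Real.sqrt_mul ha.le b
  -- main products
  have main1 : φt * φt1 = φbarm := by
    show (1 / s) • h * ((1 / (2 * Real.sqrt (a * b))) •
        ((2 - μ) • (φ * h) + (2 * a) • φ)) =
      -((1 / t) • ((1 - μ / 2) • φ + φ * h))
    rw [hab]
    rw [smul_mul_assoc, mul_smul_comm, mul_add, mul_smul_comm, mul_smul_comm,
      ← mul_assoc, hkey1]
    rw [show h * φ = -(φ * h) from hanti]
    match_scalars
    · field_simp
      linear_combination (2 - μ) * hss + (2 - μ) * ha'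
    · field_simp
      linear_combination hss + ha'
  have main2 : φt1 * φt = φbarp := by
    show ((1 / (2 * Real.sqrt (a * b))) •
        ((2 - μ) • (φ * h) + (2 * a) • φ)) * ((1 / s) • h) =
      (1 / t) • ((1 - μ / 2) • φ + φ * h)
    rw [hab]
    rw [mul_smul_comm, smul_mul_assoc, add_mul, smul_mul_assoc, smul_mul_assoc,
      hkey2]
    match_scalars
    · field_simp
      linear_combination (-(2 - μ)) * hss + (-(2 - μ)) * ha'
    · field_simp
      linear_combination (-1) * hss + (-1) * ha'
  exact ⟨main1, main2, by rw [main1, main2]⟩
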